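/- Let A = ([a_ij, b_ij]) be an n×n interval matrix, and let λ ∈ ℝ be such that every symmetric matrix M with a_ij ≤ M_ij ≤ b_ij for all i, j satisfies λ_min(M) ≥ λ. Let f : ℝⁿ → ℝ be C², x* a point, and B a convex set containing x* such that for all x ∈ B the symmetric matrix D²f(x) − D²f(x*) has all entries within the corresponding intervals [a_ij, b_ij]. Then for all x ∈ B, f(x) ≥ f(x*) + ∇f(x*)·(x − x*) + (1/2)(x−x*)ᵀ D²f(x*) (x−x*) + (λ/2)‖x − x*‖². -/

import Mathlib

open Matrix

lemma key1d (g : ℝ → ℝ) (c : ℝ) (hg : Differentiable ℝ g)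
    (hg' : Differentiable ℝ (deriv g))
    (hc : ∀ t ∈ Set.Icc (0:ℝ) 1, c ≤ deriv (deriv g) t) :
    g 0 + deriv g 0 + c / 2 ≤ g 1 := by
  set φ' : ℝ → ℝ := fun t => deriv g t - deriv g 0 - c * t with hφ'def
  set φ : ℝ → ℝ := fun t => g t - g 0 - deriv g 0 * t - c * t ^ 2 / 2 with hφdef
  have hdφ' : ∀ t, HasDerivAt φ' (deriv (deriv g) t - c) t := by
    intro t
    have h1 : HasDerivAt (fun t => c * t) c t := by
      simpa using (hasDerivAt_id t).const_mul c
    exact ((hg' t).hasDerivAt.sub_const _).sub h1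
  have hdφ : ∀ t, HasDerivAt φ (φ' t) t := by
    intro t
    have h1 : HasDerivAt (fun t => deriv g 0 * t) (deriv g 0) t := by
      simpa using (hasDerivAt_id t).const_mul (deriv g 0)
    have h2 : HasDerivAt (fun t => c * t ^ 2 / 2) (c * t) t := by
      have := ((hasDerivAt_pow 2 t).const_mul c).div_const 2
      simpa using this.congr_deriv (by ring)
    exact (((hg t).hasDerivAt.sub_const _).sub h1).sub h2
  have hmono' : MonotoneOn φ' (Set.Icc 0 1) := by
    apply monotoneOn_of_deriv_nonneg (convex_Icc 0 1)
      (fun t _ => ((hdφ' t).continuousAt).continuousWithinAt)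
      (fun t _ => ((hdφ' t).differentiableAt).differentiableWithinAt)
    intro t ht
    rw [(hdφ' t).deriv]
    rw [interior_Icc] at ht
    have := hc t ⟨le_of_lt ht.1, le_of_lt ht.2⟩
    linarith
  have hφ'0 : φ' 0 = 0 := by simp [hφ'def]
  have hφ'nonneg : ∀ t ∈ Set.Icc (0:ℝ) 1, 0 ≤ φ' t := by
    intro t ht
    have := hmono' (Set.left_mem_Icc.2 one_pos.le) ht ht.1
    rwa [hφ'0] at this
  have hmono : MonotoneOn φ (Set.Icc 0 1) := by
    apply monotoneOn_of_deriv_nonneg (convex_Icc 0 1)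
      (fun t _ => ((hdφ t).continuousAt).continuousWithinAt)
      (fun t _ => ((hdφ t).differentiableAt).differentiableWithinAt)
    intro t ht
    rw [(hdφ t).deriv]
    rw [interior_Icc] at ht
    exact hφ'nonneg t ⟨le_of_lt ht.1, le_of_lt ht.2⟩
  have h01 := hmono (Set.left_mem_Icc.2 one_pos.le) (Set.right_mem_Icc.2 one_pos.le) zero_le_one
  simp only [hφdef] at h01
  nlinarith [h01]

lemma expand_bilin (n : ℕ) (D : EuclideanSpace ℝ (Fin n) →L[ℝ] EuclideanSpace ℝ (Fin n) →L[ℝ] ℝ)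
    (v : EuclideanSpace ℝ (Fin n)) :
    D v v = ∑ i, ∑ j, v i * v j * D (EuclideanSpace.single i 1) (EuclideanSpace.single j 1) := by
  have hv : v = ∑ i, v i • (EuclideanSpace.single i 1 : EuclideanSpace ℝ (Fin n)) := by
    ext j
    rw [show ((∑ i, v i • EuclideanSpace.single i 1 : EuclideanSpace ℝ (Fin n)) j)
        = ∑ i, (v i • (EuclideanSpace.single i 1 : EuclideanSpace ℝ (Fin n))) j from
      by rw [WithLp.ofLp_sum, Finset.sum_apply]]
    simp [EuclideanSpace.single_apply]
  conv_lhs => rw [hv]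
  rw [map_sum]
  simp only [_root_.map_smul, ContinuousLinearMap.sum_apply, ContinuousLinearMap.smul_apply,
    map_sum, ContinuousLinearMap.coe_smul', Pi.smul_apply, smul_eq_mul, Finset.mul_sum]
  rw [Finset.sum_comm]
  refine Finset.sum_congr rfl fun i _ => Finset.sum_congr rfl fun j _ => by ring

/-- Robust interval-matrix eigenvalue bound combined with the second-order
Taylor underestimator: if every symmetric matrix within the interval matrix
`[a, b]` has smallest eigenvalue at least `λ`, and the Hessian difference
`D²f(x) − D²f(x*)` stays entrywise within `[a, b]` on the convex set `B`,
then the quadratic Taylor model shifted by `(λ/2)‖x − x*‖²` underestimates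
`f` on `B`. -/
theorem robust_interval_hessian_underestimator
    (n : ℕ) (a b : Matrix (Fin n) (Fin n) ℝ) (lam : ℝ)
    (hlam : ∀ M : Matrix (Fin n) (Fin n) ℝ, M.IsSymm →
      (∀ i j, a i j ≤ M i j ∧ M i j ≤ b i j) →
      ∀ v : EuclideanSpace ℝ (Fin n),
        lam * ‖v‖ ^ 2 ≤ (fun i => v i) ⬝ᵥ M.mulVec (fun i => v i))
    (f : EuclideanSpace ℝ (Fin n) → ℝ) (hf : ContDiff ℝ 2 f)
    (xs : EuclideanSpace ℝ (Fin n))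
    (B : Set (EuclideanSpace ℝ (Fin n))) (hB : Convex ℝ B) (hxs : xs ∈ B)
    (hencl : ∀ x ∈ B, ∀ i j,
      a i j ≤ iteratedFDeriv ℝ 2 f x ![EuclideanSpace.single i 1, EuclideanSpace.single j 1]
              - iteratedFDeriv ℝ 2 f xs ![EuclideanSpace.single i 1, EuclideanSpace.single j 1]
      ∧ iteratedFDeriv ℝ 2 f x ![EuclideanSpace.single i 1, EuclideanSpace.single j 1]
              - iteratedFDeriv ℝ 2 f xs ![EuclideanSpace.single i 1, EuclideanSpace.single j 1]
            ≤ b i j) :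
    ∀ x ∈ B,
      f x ≥ f xs + inner ℝ (gradient f xs) (x - xs)
        + (1 / 2) * iteratedFDeriv ℝ 2 f xs ![x - xs, x - xs]
        + lam / 2 * ‖x - xs‖ ^ 2 := by
  intro x hx
  set v : EuclideanSpace ℝ (Fin n) := x - xs with hvdef
  set γ : ℝ → EuclideanSpace ℝ (Fin n) := fun t => xs + t • v with hγdef
  have hγd : ∀ t : ℝ, HasDerivAt γ v t := by
    intro t
    have h := ((hasDerivAt_id t).smul_const v).const_add xs; rw [one_smul] at h; exact h
  have hγB : ∀ t ∈ Set.Icc (0:ℝ) 1, γ t ∈ B := fun t ht => hB.add_smul_sub_mem hxs hx ht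
  have hfd : Differentiable ℝ f := hf.differentiable (by norm_num)
  have hf'c : ContDiff ℝ 1 (fderiv ℝ f) := hf.fderiv_right (by norm_num)
  set g : ℝ → ℝ := fun t => f (γ t) with hgdef
  have hg' : ∀ t, HasDerivAt g (fderiv ℝ f (γ t) v) t := fun t =>
    ((hfd (γ t)).hasFDerivAt).comp_hasDerivAt t (hγd t)
  have hderivg : deriv g = fun t => fderiv ℝ f (γ t) v := funext fun t => (hg' t).deriv
  have hg'' : ∀ t, HasDerivAt (deriv g) (fderiv ℝ (fderiv ℝ f) (γ t) v v) t := by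
    intro t
    rw [hderivg]
    have h1 : HasDerivAt (fun t => fderiv ℝ f (γ t)) (fderiv ℝ (fderiv ℝ f) (γ t) v) t :=
      ((hf'c.differentiable one_ne_zero (γ t)).hasFDerivAt).comp_hasDerivAt t (hγd t)
    simpa using h1.clm_apply (hasDerivAt_const t v)
  have hderivg' : deriv (deriv g) = fun t => fderiv ℝ (fderiv ℝ f) (γ t) v v :=
    funext fun t => (hg'' t).deriv
  have hsymm : ∀ y : EuclideanSpace ℝ (Fin n), IsSymmSndFDerivAt ℝ f y := fun y =>
    hf.contDiffAt.isSymmSndFDerivAt (by norm_num)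
  have htwo : ∀ (y : EuclideanSpace ℝ (Fin n)) (u w : EuclideanSpace ℝ (Fin n)),
      iteratedFDeriv ℝ 2 f y ![u, w] = fderiv ℝ (fderiv ℝ f) y u w := by
    intro y u w
    rw [iteratedFDeriv_two_apply]
    simp
  have hkey : ∀ y ∈ B,
      fderiv ℝ (fderiv ℝ f) xs v v + lam * ‖v‖ ^ 2 ≤ fderiv ℝ (fderiv ℝ f) y v v := by
    intro y hy
    set M : Matrix (Fin n) (Fin n) ℝ := Matrix.of fun i j =>
      fderiv ℝ (fderiv ℝ f) y (EuclideanSpace.single i 1) (EuclideanSpace.single j 1)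
      - fderiv ℝ (fderiv ℝ f) xs (EuclideanSpace.single i 1) (EuclideanSpace.single j 1)
      with hMdef
    have hMs : M.IsSymm := by
      ext i j
      simp only [Matrix.transpose_apply, hMdef, Matrix.of_apply]
      rw [hsymm y (EuclideanSpace.single j 1) (EuclideanSpace.single i 1),
        hsymm xs (EuclideanSpace.single j 1) (EuclideanSpace.single i 1)]
    have hMb : ∀ i j, a i j ≤ M i j ∧ M i j ≤ b i j := by
      intro i j
      have h := hencl y hy i j
      rw [htwo, htwo] at h
      exact h
    have hl := hlam M hMs hMb v
    have hdot : (fun i => v i) ⬝ᵥ M.mulVec (fun i => v i)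
        = fderiv ℝ (fderiv ℝ f) y v v - fderiv ℝ (fderiv ℝ f) xs v v := by
      rw [expand_bilin n (fderiv ℝ (fderiv ℝ f) y) v,
        expand_bilin n (fderiv ℝ (fderiv ℝ f) xs) v]
      rw [← Finset.sum_sub_distrib]
      simp only [dotProduct, Matrix.mulVec, hMdef, Matrix.of_apply]
      refine Finset.sum_congr rfl fun i _ => ?_
      rw [← Finset.sum_sub_distrib, Finset.mul_sum]
      refine Finset.sum_congr rfl fun j _ => by ring
    rw [hdot] at hl
    linarith
  have hc : ∀ t ∈ Set.Icc (0:ℝ) 1,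
      fderiv ℝ (fderiv ℝ f) xs v v + lam * ‖v‖ ^ 2 ≤ deriv (deriv g) t := by
    intro t ht
    rw [hderivg']
    exact hkey (γ t) (hγB t ht)
  have hmain := key1d g (fderiv ℝ (fderiv ℝ f) xs v v + lam * ‖v‖ ^ 2)
    (fun t => (hg' t).differentiableAt) (fun t => (hg'' t).differentiableAt) hc
  have hg1 : g 1 = f x := by simp [hgdef, hγdef, hvdef]
  have hg0 : g 0 = f xs := by simp [hgdef, hγdef]
  have hγ0 : γ 0 = xs := by simp [hγdef]
  have hdg0 : deriv g 0 = fderiv ℝ f xs v := by rw [hderivg]; simp [hγ0]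
  have hgrad : (inner ℝ (gradient f xs) v : ℝ) = fderiv ℝ f xs v := by
    rw [gradient]
    exact InnerProductSpace.toDual_symm_apply
  have hiter : iteratedFDeriv ℝ 2 f xs ![v, v] = fderiv ℝ (fderiv ℝ f) xs v v := htwo xs v v
  rw [ge_iff_le, hgrad, hiter]
  rw [hg1, hg0, hdg0] at hmain
  linarith
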